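/- Given differentiable G on I ⊂ (0,∞) with G' ≠ 0, constants c, and defining η_H = cG, Γ_H = c(G - 2ρG'), W = (2c/ρ)(G')², these functions satisfy all three constraints: η_H'G'/ρ = W/2, (G'/ρ)(Γ_H - η_H) + ρW = 0, and (G'/ρ)'(Γ_H - η_H) - η_H'G'/ρ + ρW'/2 = 0. -/

import Mathlib

/-- For η_H = cG, Γ_H = c(G - 2ρG'), W = (2c/ρ)(G')², all three energy-conservation
constraints are satisfied. -/
theorem case2_satisfies_constraints
    (I : Set ℝ) (hIopen : IsOpen I) (hIpos : I ⊆ Set.Ioi (0 : ℝ))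
    (G G' G'' : ℝ → ℝ)
    (hG : ∀ ρ ∈ I, HasDerivAt G (G' ρ) ρ)
    (hG' : ∀ ρ ∈ I, HasDerivAt G' (G'' ρ) ρ)
    (hGne : ∀ ρ ∈ I, G' ρ ≠ 0)
    (c : ℝ) (ηH ΓH W : ℝ → ℝ)
    (hη : ∀ ρ, ηH ρ = c * G ρ)
    (hΓ : ∀ ρ, ΓH ρ = c * (G ρ - 2 * ρ * G' ρ))
    (hW : ∀ ρ, W ρ = (2 * c / ρ) * G' ρ ^ 2) :
    ∀ ρ ∈ I,
      deriv ηH ρ * G' ρ / ρ = W ρ / 2 ∧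
      (G' ρ / ρ) * (ΓH ρ - ηH ρ) + ρ * W ρ = 0 ∧
      deriv (fun s => G' s / s) ρ * (ΓH ρ - ηH ρ) -
        deriv ηH ρ * G' ρ / ρ + ρ * deriv W ρ / 2 = 0 := by
  intro ρ hρ
  have hρpos : (0:ℝ) < ρ := hIpos hρ
  have hρne : ρ ≠ 0 := ne_of_gt hρpos
  have hηfun : ηH = fun s => c * G s := funext hη
  have hWfun : W = fun s => (2 * c / s) * G' s ^ 2 := funext hW
  have hdη : deriv ηH ρ = c * G' ρ := by
    rw [hηfun]
    exact (((hG ρ hρ).const_mul c)).deriv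
  have hdW : HasDerivAt W
      ((-(2 * c) / ρ ^ 2) * G' ρ ^ 2 + (2 * c / ρ) * (2 * G' ρ * G'' ρ)) ρ := by
    rw [hWfun]
    have h1 : HasDerivAt (fun s : ℝ => 2 * c / s) (-(2 * c) / ρ ^ 2) ρ := by
      have := (hasDerivAt_const ρ (2 * c)).div (hasDerivAt_id ρ) hρne
      exact this.congr_deriv (by simp only [id]; ring)
    have h2 : HasDerivAt (fun s => G' s ^ 2) (2 * G' ρ * G'' ρ) ρ := by
      have := (hG' ρ hρ).pow 2
      exact this.congr_deriv (by norm_num [pow_one])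
    exact h1.mul h2
  have hdW' : deriv W ρ =
      (-(2 * c) / ρ ^ 2) * G' ρ ^ 2 + (2 * c / ρ) * (2 * G' ρ * G'' ρ) := hdW.deriv
  have hdq : deriv (fun s => G' s / s) ρ = (G'' ρ * ρ - G' ρ * 1) / ρ ^ 2 := by
    exact ((hG' ρ hρ).div (hasDerivAt_id ρ) hρne).deriv
  refine ⟨?_, ?_, ?_⟩
  · rw [hdη, hW]; field_simp
  · rw [hΓ, hη, hW]; field_simp; ring
  · rw [hdq, hdη, hdW', hΓ, hη]; field_simp; ring
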